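/- For all integers m, n ≥ 2 with mn ≥ 4 and m + n ≥ 5, the Cartesian product K_m □ K_n of two complete graphs satisfies dim_ms(K_m □ K_n) = mn − 1. -/

import Mathlib

open SimpleGraph

/-- The multiset representation of `u` with respect to `S`: the multiset of
distances from `u` to the vertices of `S`, counted with multiplicity. -/
noncomputable def mrep {V : Type*} (G : SimpleGraph V) (u : V) (S : Finset V) : Multiset ℕ :=
  S.val.map fun w => G.dist u w

/-- `S` is an outer multiset resolving set of `G`: the multiset representations of
the vertices outside `S` are pairwise distinct. -/
def IsOMR {V : Type*} (G : SimpleGraph V) (S : Finset V) : Prop :=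
  ∀ u ∉ S, ∀ v ∉ S, mrep G u S = mrep G v S → u = v

/-- The outer multiset dimension of `G`. -/
noncomputable def dimMS {V : Type*} (G : SimpleGraph V) [Fintype V] : ℕ :=
  sInf {n | ∃ S : Finset V, S.card = n ∧ IsOMR G S}

/-- The diameter of `G`: the largest distance between vertices of `G`. -/
noncomputable def gdiam {V : Type*} (G : SimpleGraph V) [Fintype V] : ℕ :=
  Finset.univ.sup fun p : V × V => G.dist p.1 p.2

instance KGadjdec {m n : ℕ} :
    DecidableRel (((⊤ : SimpleGraph (Fin m)) □ (⊤ : SimpleGraph (Fin n))).Adj) :=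
  fun _ _ => decidable_of_iff _ (boxProd_adj).symm

lemma dist_two {m n : ℕ} (u w : Fin m × Fin n)
    (hne : u ≠ w) (hadj : ¬ ((⊤ : SimpleGraph (Fin m)) □ (⊤ : SimpleGraph (Fin n))).Adj u w) :
    ((⊤ : SimpleGraph (Fin m)) □ (⊤ : SimpleGraph (Fin n))).dist u w = 2 := by
  set G := (⊤ : SimpleGraph (Fin m)) □ (⊤ : SimpleGraph (Fin n)) with hG
  obtain ⟨a, b⟩ := u; obtain ⟨c, d⟩ := w
  have hac : a ≠ c := by
    rintro rfl
    have hbd : b ≠ d := by simpa using hne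
    exact hadj (by simp [hG, boxProd_adj, hbd])
  have hbd : b ≠ d := by
    rintro rfl
    exact hadj (by simp [hG, boxProd_adj, hac])
  have h1 : G.Adj (a, b) (a, d) := by simp [hG, boxProd_adj, hbd]
  have h2 : G.Adj (a, d) (c, d) := by simp [hG, boxProd_adj, hac]
  let p : G.Walk (a, b) (c, d) := Walk.cons h1 (Walk.cons h2 Walk.nil)
  have hle : G.dist (a, b) (c, d) ≤ 2 := SimpleGraph.dist_le p
  have h0 : G.dist (a, b) (c, d) ≠ 0 := by
    intro h
    rw [SimpleGraph.dist_eq_zero_iff_eq_or_not_reachable] at h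
    rcases h with h | h
    · exact hne h
    · exact h p.reachable
  have hone : G.dist (a, b) (c, d) ≠ 1 := by
    intro h
    exact hadj ((SimpleGraph.dist_eq_one_iff_adj (G := G)).mp h)
  omega

lemma mrep_eq {m n : ℕ} (u : Fin m × Fin n) (S : Finset (Fin m × Fin n)) (hu : u ∉ S) :
    mrep ((⊤ : SimpleGraph (Fin m)) □ (⊤ : SimpleGraph (Fin n))) u S
      = Multiset.replicate
          ((S.filter (fun w => ((⊤ : SimpleGraph (Fin m)) □ (⊤ : SimpleGraph (Fin n))).Adj u w)).card) 1
      + Multiset.replicate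
          ((S.filter (fun w => ¬ ((⊤ : SimpleGraph (Fin m)) □ (⊤ : SimpleGraph (Fin n))).Adj u w)).card) 2 := by
  set G := (⊤ : SimpleGraph (Fin m)) □ (⊤ : SimpleGraph (Fin n)) with hG
  unfold mrep
  conv_lhs => rw [← Multiset.filter_add_not (fun w => G.Adj u w) S.val]
  rw [Multiset.map_add]
  congr 1
  · rw [Multiset.eq_replicate]
    constructor
    · rw [Multiset.card_map]
      rw [Finset.card, Finset.filter_val]
    · intro b hb
      obtain ⟨w, hw, rfl⟩ := Multiset.mem_map.mp hb
      rw [Multiset.mem_filter] at hw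
      exact (SimpleGraph.dist_eq_one_iff_adj (G := G)).mpr hw.2
  · rw [Multiset.eq_replicate]
    constructor
    · rw [Multiset.card_map]
      rw [Finset.card, Finset.filter_val]
    · intro b hb
      obtain ⟨w, hw, rfl⟩ := Multiset.mem_map.mp hb
      rw [Multiset.mem_filter] at hw
      have hne : u ≠ w := by
        rintro rfl; exact hu hw.1
      exact dist_two u w hne hw.2

lemma regular_card {m n : ℕ} (u v : Fin m × Fin n) :
    (Finset.univ.filter (fun w => ((⊤ : SimpleGraph (Fin m)) □ (⊤ : SimpleGraph (Fin n))).Adj u w)).card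
      = (Finset.univ.filter (fun w => ((⊤ : SimpleGraph (Fin m)) □ (⊤ : SimpleGraph (Fin n))).Adj v w)).card := by
  have h : ∀ x : Fin m × Fin n,
      (Finset.univ.filter (fun w => ((⊤ : SimpleGraph (Fin m)) □ (⊤ : SimpleGraph (Fin n))).Adj x w)).card
        = (m - 1) + (n - 1) := by
    intro x
    rw [← SimpleGraph.neighborFinset_eq_filter, ← SimpleGraph.degree]
    rw [SimpleGraph.degree_boxProd]
    rw [SimpleGraph.complete_graph_degree, SimpleGraph.complete_graph_degree]
    simp
  rw [h u, h v]

lemma not_omr {m n : ℕ} (S : Finset (Fin m × Fin n)) (hS : 2 ≤ Sᶜ.card) :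
    ¬ IsOMR ((⊤ : SimpleGraph (Fin m)) □ (⊤ : SimpleGraph (Fin n))) S := by
  set G := (⊤ : SimpleGraph (Fin m)) □ (⊤ : SimpleGraph (Fin n)) with hG
  intro hOMR
  set T := Sᶜ with hT
  set s : Fin m × Fin n → ℕ := fun u => (T.filter (fun w => G.Adj u w)).card with hs
  have hsplit : ∀ x : Fin m × Fin n,
      (S.filter (fun w => G.Adj x w)).card + (T.filter (fun w => G.Adj x w)).card
        = (Finset.univ.filter (fun w => G.Adj x w)).card := by
    intro x
    rw [← Finset.card_union_of_disjoint
      (Finset.disjoint_filter_filter (disjoint_compl_right))]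
    rw [← Finset.filter_union, Finset.union_compl]
  have hinj : ∀ u ∈ T, ∀ v ∈ T, s u = s v → u = v := by
    intro u hu v hv hsv
    have hu' : u ∉ S := Finset.mem_compl.mp hu
    have hv' : v ∉ S := Finset.mem_compl.mp hv
    have hkuv : (S.filter (fun w => G.Adj u w)).card = (S.filter (fun w => G.Adj v w)).card := by
      have h1 := hsplit u
      have h2 := hsplit v
      have h3 : (Finset.univ.filter (fun w => G.Adj u w)).card
          = (Finset.univ.filter (fun w => G.Adj v w)).card := regular_card u v
      simp only [hs] at hsv
      omega
    have hnuv : (S.filter (fun w => ¬ G.Adj u w)).card = (S.filter (fun w => ¬ G.Adj v w)).card := by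
      have h1 := Finset.card_filter_add_card_filter_not (s := S) (p := fun w => G.Adj u w)
      have h2 := Finset.card_filter_add_card_filter_not (s := S) (p := fun w => G.Adj v w)
      omega
    exact hOMR u hu' v hv' (by rw [mrep_eq u S hu', mrep_eq v S hv', hkuv, hnuv])
  have hfsub : ∀ u ∈ T, T.filter (fun w => G.Adj u w) ⊆ T.erase u := by
    intro u _ w hw
    rw [Finset.mem_filter] at hw
    exact Finset.mem_erase.mpr ⟨(G.ne_of_adj hw.2).symm, hw.1⟩
  have hsub : ∀ u ∈ T, s u ≤ T.card - 1 := by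
    intro u hu
    calc s u ≤ (T.erase u).card := Finset.card_le_card (hfsub u hu)
      _ = T.card - 1 := Finset.card_erase_of_mem hu
  have himg : T.image s = Finset.range T.card := by
    apply Finset.eq_of_subset_of_card_le
    · intro x hx
      obtain ⟨u, hu, rfl⟩ := Finset.mem_image.mp hx
      have := hsub u hu
      exact Finset.mem_range.mpr (by omega)
    · rw [Finset.card_range, Finset.card_image_of_injOn
        (fun a ha b hb => hinj a ha b hb)]
  obtain ⟨u, hu, hu0⟩ := Finset.mem_image.mp (himg ▸ Finset.mem_range.mpr (show 0 < T.card by omega))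
  obtain ⟨v, hv, hv1⟩ := Finset.mem_image.mp (himg ▸ Finset.mem_range.mpr (show T.card - 1 < T.card by omega))
  have huv : u ≠ v := by
    intro h; rw [h, hv1] at hu0; omega
  have hfv : T.filter (fun w => G.Adj v w) = T.erase v := by
    apply Finset.eq_of_subset_of_card_le (hfsub v hv)
    rw [Finset.card_erase_of_mem hv]
    exact le_of_eq hv1.symm
  have hu_mem : u ∈ T.filter (fun w => G.Adj v w) := by
    rw [hfv]
    exact Finset.mem_erase.mpr ⟨huv, hu⟩
  have hadj : G.Adj v u := (Finset.mem_filter.mp hu_mem).2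
  have hv_mem : v ∈ T.filter (fun w => G.Adj u w) := Finset.mem_filter.mpr ⟨hv, hadj.symm⟩
  have : 0 < s u := Finset.card_pos.mpr ⟨v, hv_mem⟩
  omega

theorem stmt_19 (m n : ℕ) (hm : 2 ≤ m) (hn : 2 ≤ n) (hmn4 : 4 ≤ m * n)
    (hmn5 : 5 ≤ m + n) :
    dimMS ((⊤ : SimpleGraph (Fin m)).boxProd (⊤ : SimpleGraph (Fin n))) = m * n - 1 := by
  set G := (⊤ : SimpleGraph (Fin m)) □ (⊤ : SimpleGraph (Fin n)) with hG
  have hcardV : Fintype.card (Fin m × Fin n) = m * n := by simp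
  let x : Fin m × Fin n := (⟨0, by omega⟩, ⟨0, by omega⟩)
  have hcard : (Finset.univ.erase x).card = m * n - 1 := by
    rw [Finset.card_erase_of_mem (Finset.mem_univ x), Finset.card_univ, hcardV]
  have homr : IsOMR G (Finset.univ.erase x) := by
    intro u hu v hv _
    have hu' : u = x := by simpa using hu
    have hv' : v = x := by simpa using hv
    rw [hu', hv']
  have hmem : m * n - 1 ∈ {k | ∃ S : Finset (Fin m × Fin n), S.card = k ∧ IsOMR G S} :=
    ⟨Finset.univ.erase x, hcard, homr⟩
  unfold dimMS
  apply le_antisymm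
  · exact Nat.sInf_le hmem
  · apply le_csInf ⟨_, hmem⟩
    rintro b ⟨S, rfl, hO⟩
    by_contra hlt
    push_neg at hlt
    have hc : Sᶜ.card = Fintype.card (Fin m × Fin n) - S.card := Finset.card_compl S
    rw [hcardV] at hc
    have hSlt : S.card < m * n := by
      by_contra h
      push_neg at h
      omega
    exact not_omr S (by omega) hO
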